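/- Medium stability is universal: for every finite nonempty player set N and every value function v on nonempty subsets of N, there exists a partition P of N and an allocation x : N → ℝ with x(i) ≥ v({i}) for all i and Σ_{i∈C} x(i) = v(C) for each C ∈ P, such that Σ_{C∈P} v(C) ≥ Σ_{C'∈P'} v(C') for every other partition P' of N comparable to P in the refinement order (in fact, for all partitions P'). -/

import Mathlib

open Finset

variable {α : Type*} [DecidableEq α]

/-- `P` is a partition of the finite set `N`: every block is nonempty, contained in `N`,
and every player of `N` lies in exactly one block. -/
def IsPartition (N : Finset α) (P : Finset (Finset α)) : Prop :=
  (∀ C ∈ P, C.Nonempty) ∧ (∀ C ∈ P, C ⊆ N) ∧ (∀ i ∈ N, ∃! C, C ∈ P ∧ i ∈ C)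

/-- `P'` refines `P`: every block of `P'` is contained in a block of `P`. -/
def Refines (P' P : Finset (Finset α)) : Prop :=
  ∀ C' ∈ P', ∃ C ∈ P, C' ⊆ C

/-- Strict refinement. -/
def StrictlyRefines (P' P : Finset (Finset α)) : Prop :=
  Refines P' P ∧ P' ≠ P

/-- The worth of a partition: the sum of the values of its blocks. -/
def worth (v : Finset α → ℝ) (P : Finset (Finset α)) : ℝ :=
  ∑ C ∈ P, v C

/-- universality of medium stability: every game has a partition together
with a feasible allocation whose worth dominates that of all partitions. -/
theorem medium_stability_universal (N : Finset α) (v : Finset α → ℝ) (hN : N.Nonempty) :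
    ∃ (P : Finset (Finset α)) (x : α → ℝ), IsPartition N P ∧
      (∀ i ∈ N, v {i} ≤ x i) ∧
      (∀ C ∈ P, ∑ i ∈ C, x i = v C) ∧
      (∀ P' : Finset (Finset α), IsPartition N P' → worth v P' ≤ worth v P) := by
  classical
  set S := (N.powerset.powerset).filter (fun P => IsPartition N P) with hS
  have hP0 : IsPartition N (N.image fun i => ({i} : Finset α)) := by
    refine ⟨?_, ?_, ?_⟩
    · intro C hC; obtain ⟨i, hi, rfl⟩ := mem_image.mp hC; exact singleton_nonempty i
    · intro C hC; obtain ⟨i, hi, rfl⟩ := mem_image.mp hC; exact singleton_subset_iff.mpr hi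
    · intro i hi
      refine ⟨{i}, ⟨mem_image_of_mem _ hi, mem_singleton_self i⟩, ?_⟩
      rintro C ⟨hC, hiC⟩
      obtain ⟨j, hj, rfl⟩ := mem_image.mp hC
      rw [← mem_singleton.mp hiC]
  have hmemS : ∀ P', IsPartition N P' → P' ∈ S := by
    intro P' h
    simp only [hS, mem_filter, mem_powerset]
    exact ⟨fun C hC => mem_powerset.mpr (h.2.1 C hC), h⟩
  obtain ⟨P, hPS, hmax⟩ := S.exists_max_image (worth v) ⟨_, hmemS _ hP0⟩
  have hP : IsPartition N P := (mem_filter.mp hPS).2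
  -- key: each block is superadditive over singletons
  have hkey : ∀ C ∈ P, ∑ j ∈ C, v {j} ≤ v C := by
    intro C hC
    set Q := (P.erase C) ∪ C.image (fun j => ({j} : Finset α)) with hQ
    have hCN : C ⊆ N := hP.2.1 C hC
    have hdisj : Disjoint (P.erase C) (C.image (fun j => ({j} : Finset α))) := by
      rw [Finset.disjoint_left]
      intro D hD hD'
      obtain ⟨j, hj, rfl⟩ := mem_image.mp hD'
      have hjN : j ∈ N := hCN hj
      have h1 := (hP.2.2 j hjN).unique ⟨mem_of_mem_erase hD, mem_singleton_self j⟩ ⟨hC, hj⟩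
      exact (ne_of_mem_erase hD) h1
    have hpartQ : IsPartition N Q := by
      refine ⟨?_, ?_, ?_⟩
      · intro D hD
        rcases mem_union.mp hD with h | h
        · exact hP.1 D (mem_of_mem_erase h)
        · obtain ⟨j, hj, rfl⟩ := mem_image.mp h; exact singleton_nonempty j
      · intro D hD
        rcases mem_union.mp hD with h | h
        · exact hP.2.1 D (mem_of_mem_erase h)
        · obtain ⟨j, hj, rfl⟩ := mem_image.mp h
          exact singleton_subset_iff.mpr (hCN hj)
      · intro i hi
        obtain ⟨D, ⟨hD, hiD⟩, hDu⟩ := hP.2.2 i hi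
        by_cases hDC : D = C
        · subst hDC
          refine ⟨{i}, ⟨mem_union_right _ (mem_image_of_mem _ hiD), mem_singleton_self i⟩, ?_⟩
          rintro E ⟨hE, hiE⟩
          rcases mem_union.mp hE with h | h
          · exact absurd (hDu E ⟨mem_of_mem_erase h, hiE⟩) (ne_of_mem_erase h)
          · obtain ⟨j, hj, rfl⟩ := mem_image.mp h
            rw [← mem_singleton.mp hiE]
        · refine ⟨D, ⟨mem_union_left _ (mem_erase.mpr ⟨hDC, hD⟩), hiD⟩, ?_⟩
          rintro E ⟨hE, hiE⟩
          rcases mem_union.mp hE with h | h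
          · exact hDu E ⟨mem_of_mem_erase h, hiE⟩
          · obtain ⟨j, hj, rfl⟩ := mem_image.mp h
            have : i = j := mem_singleton.mp hiE
            subst this
            exact absurd (hDu C ⟨hC, hj⟩).symm hDC
    have hwQ : worth v Q = (∑ D ∈ P.erase C, v D) + ∑ j ∈ C, v {j} := by
      rw [worth, hQ, Finset.sum_union hdisj, Finset.sum_image]
      intro a _ b _ h
      exact Finset.singleton_injective h
    have hwP : worth v P = (∑ D ∈ P.erase C, v D) + v C := by
      rw [worth, ← Finset.sum_erase_add _ _ hC]
    have := hmax Q (hmemS Q hpartQ)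
    rw [hwQ, hwP] at this
    linarith
  have hex : ∀ i ∈ N, ∃! C, C ∈ P ∧ i ∈ C := hP.2.2
  set x : α → ℝ := fun i =>
    if h : i ∈ N then
      v {i} + (v (Finset.choose (fun D => i ∈ D) P (hex i h)) -
        ∑ j ∈ Finset.choose (fun D => i ∈ D) P (hex i h), v {j}) /
        ((Finset.choose (fun D => i ∈ D) P (hex i h)).card : ℝ)
    else 0 with hx
  have hchoose : ∀ (i : α) (h : i ∈ N) (C : Finset α), C ∈ P → i ∈ C →
      Finset.choose (fun D => i ∈ D) P (hex i h) = C := by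
    intro i h C hC hiC
    exact (hex i h).unique ⟨Finset.choose_mem _ _ _, Finset.choose_property (fun D => i ∈ D) P (hex i h)⟩ ⟨hC, hiC⟩
  refine ⟨P, x, hP, ?_, ?_, ?_⟩
  · intro i hi
    have hCP : Finset.choose (fun D => i ∈ D) P (hex i hi) ∈ P := Finset.choose_mem _ _ _
    have hnum := hkey _ hCP
    have : (0:ℝ) ≤ (v (Finset.choose (fun D => i ∈ D) P (hex i hi)) -
        ∑ j ∈ Finset.choose (fun D => i ∈ D) P (hex i hi), v {j}) /
        ((Finset.choose (fun D => i ∈ D) P (hex i hi)).card : ℝ) :=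
      div_nonneg (by linarith) (Nat.cast_nonneg _)
    rw [hx]
    simp only [dif_pos hi]
    linarith
  · intro C hC
    have hCN : C ⊆ N := hP.2.1 C hC
    have hcard : (C.card : ℝ) ≠ 0 := by
      exact_mod_cast Finset.card_ne_zero_of_mem (hP.1 C hC).choose_spec
    have hstep : ∀ i ∈ C, x i = v {i} + (v C - ∑ j ∈ C, v {j}) / (C.card : ℝ) := by
      intro i hi
      have hiN := hCN hi
      rw [hx]
      simp only [dif_pos hiN, hchoose i hiN C hC hi]
    rw [Finset.sum_congr rfl hstep, Finset.sum_add_distrib, Finset.sum_const, nsmul_eq_mul]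
    field_simp
    ring
  · intro P' hP'
    exact hmax P' (hmemS P' hP')
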